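/- Fix p ∈ (0,1), q = 1 − p. Let {Ỹ_{ij}}_{i,j≥1} be i.i.d. with ℙ(Ỹ = s) = q·pˢ for s ∈ ℤ₊, and define τ(i,j) by τ(i,j) = ((τ(i−1,j)+1) ∨ τ(i,j−1)) + Ỹ_{ij} with τ(0,j) = τ(i,0) = 0. Let {Y_v}_{v∈ℕ²} be i.i.d. with ℙ(Y = s) = q·p^{s−1} for s ∈ ℕ, and let G(i,j) be the last-passage time G(i,j) = max over up-right paths π from (1,1) to (i,j) of Σ_{v∈π} Y_v. Then for every i,j ≥ 1, τ(i,j) has the same distribution as G(i,j) − j + 1. -/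

import Mathlib

open MeasureTheory ProbabilityTheory

/-- The recursion `τ(i,j) = ((τ(i-1,j) + 1) ⊔ τ(i,j-1)) + Ỹ_{ij}` with boundary
conditions `τ(0,j) = τ(i,0) = 0`, for `ℕ`-valued weights. -/
noncomputable def tauRecN (Y : ℕ × ℕ → ℕ) : ℕ → ℕ → ℕ
  | 0, _ => 0
  | _ + 1, 0 => 0
  | i + 1, j + 1 =>
      max (tauRecN Y i (j + 1) + 1) (tauRecN Y (i + 1) j) + Y (i + 1, j + 1)
  termination_by i j => (i, j)

/-- `IsUpRightPath f len m n` : `f 0, f 1, …, f (len - 1)` is an up-right lattice path from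
`(1,1)` to `(m,n)`, each step increasing exactly one coordinate by 1. -/
def IsUpRightPath (f : ℕ → ℕ × ℕ) (len m n : ℕ) : Prop :=
  f 0 = (1, 1) ∧ f (len - 1) = (m, n) ∧
    ∀ k, k + 1 < len →
      f (k + 1) = ((f k).1 + 1, (f k).2) ∨ f (k + 1) = ((f k).1, (f k).2 + 1)

/-- Last-passage time over up-right paths, `ℕ`-valued weights. -/
noncomputable def GN (Y : ℕ × ℕ → ℕ) (m n : ℕ) : ℕ :=
  sSup {S : ℕ | ∃ f : ℕ → ℕ × ℕ, IsUpRightPath f (m + n - 1) m n ∧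
    S = ∑ k ∈ Finset.range (m + n - 1), Y (f k)}

noncomputable def GrecAux (w : ℕ × ℕ → ℕ) : ℕ → ℕ → ℕ
  | 0, _ => 0
  | _ + 1, 0 => 0
  | i + 1, j + 1 => max (GrecAux w i (j + 1)) (GrecAux w (i + 1) j) + w (i + 1, j + 1)
  termination_by i j => (i, j)

lemma tauRecN_pos (Y : ℕ × ℕ → ℕ) (i j : ℕ) : 1 ≤ tauRecN Y (i + 1) (j + 1) := by
  rw [tauRecN]
  have : 1 ≤ max (tauRecN Y i (j + 1) + 1) (tauRecN Y (i + 1) j) :=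
    le_trans (Nat.le_add_left 1 _) (le_max_left _ _)
  omega

lemma grec_eq_tau (Yt : ℕ × ℕ → ℕ) : ∀ i j,
    GrecAux (fun v => Yt v + 1) (i + 1) (j + 1) = tauRecN Yt (i + 1) (j + 1) + j := by
  intro i
  induction i with
  | zero =>
    intro j
    induction j with
    | zero => rw [GrecAux, tauRecN]; simp [GrecAux, tauRecN]; omega
    | succ j ihj =>
      rw [GrecAux, tauRecN]
      have h0 : GrecAux (fun v => Yt v + 1) 0 (j + 2) = 0 := by rw [GrecAux]
      have h0' : tauRecN Yt 0 (j + 2) = 0 := by rw [tauRecN]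
      have h1 : 1 ≤ tauRecN Yt 1 (j + 1) := tauRecN_pos Yt 0 j
      rw [h0, h0', ihj]
      simp only [Nat.zero_add] at *
      omega
  | succ i ih =>
    intro j
    induction j with
    | zero =>
      rw [GrecAux, tauRecN]
      have h0 : GrecAux (fun v => Yt v + 1) (i + 2) 0 = 0 := by rw [GrecAux]
      have h0' : tauRecN Yt (i + 2) 0 = 0 := by rw [tauRecN]
      rw [h0, h0', ih 0]
      simp only [Nat.zero_add, Nat.add_zero] at *
      omega
    | succ j ihj =>
      rw [GrecAux, tauRecN]
      have h1 : 1 ≤ tauRecN Yt (i + 1 + 1) (j + 1) := tauRecN_pos Yt (i + 1) j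
      rw [ih (j + 1), ihj]
      omega

lemma path_coord_pos {f : ℕ → ℕ × ℕ} {len m n : ℕ} (h : IsUpRightPath f len m n) :
    ∀ k, k < len → 1 ≤ (f k).1 ∧ 1 ≤ (f k).2 := by
  intro k
  induction k with
  | zero => intro _; rw [h.1]; exact ⟨le_refl 1, le_refl 1⟩
  | succ k ih =>
    intro hk
    have hk' : k < len := by omega
    have hstep := h.2.2 k (by omega)
    obtain ⟨h1, h2⟩ := ih hk'
    rcases hstep with hs | hs <;> rw [hs] <;> constructor <;> simp <;> omega

lemma path_truncate {f : ℕ → ℕ × ℕ} {L m n : ℕ} (hL : 1 ≤ L)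
    (h : IsUpRightPath f (L + 1) m n) :
    (2 ≤ m ∧ f (L - 1) = (m - 1, n) ∧ IsUpRightPath f L (m - 1) n) ∨
    (2 ≤ n ∧ f (L - 1) = (m, n - 1) ∧ IsUpRightPath f L m (n - 1)) := by
  have hfL : f L = (m, n) := by
    have := h.2.1; simpa using this
  have hstep := h.2.2 (L - 1) (by omega)
  have hL1 : L - 1 + 1 = L := by omega
  rw [hL1] at hstep
  have hpos := path_coord_pos h (L - 1) (by omega)
  rcases hstep with hs | hs
  · left
    have h1 : (f (L - 1)).1 + 1 = m := by rw [hfL] at hs; exact (congrArg Prod.fst hs).symm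
    have h2 : (f (L - 1)).2 = n := by rw [hfL] at hs; exact (congrArg Prod.snd hs).symm
    have hm : 2 ≤ m := by omega
    have hfl : f (L - 1) = (m - 1, n) := by
      ext <;> simp <;> omega
    exact ⟨hm, hfl, h.1, hfl, fun k hk => h.2.2 k (by omega)⟩
  · right
    have h1 : (f (L - 1)).1 = m := by rw [hfL] at hs; exact (congrArg Prod.fst hs).symm
    have h2 : (f (L - 1)).2 + 1 = n := by rw [hfL] at hs; exact (congrArg Prod.snd hs).symm
    have hn : 2 ≤ n := by omega
    have hfl : f (L - 1) = (m, n - 1) := by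
      ext <;> simp <;> omega
    exact ⟨hn, hfl, h.1, hfl, fun k hk => h.2.2 k (by omega)⟩

lemma path_sum_le (w : ℕ × ℕ → ℕ) :
    ∀ N m n (f : ℕ → ℕ × ℕ), m + n = N → 1 ≤ m → 1 ≤ n →
      IsUpRightPath f (m + n - 1) m n →
      ∑ k ∈ Finset.range (m + n - 1), w (f k) ≤ GrecAux w m n := by
  intro N
  induction N using Nat.strong_induction_on with
  | _ N IH =>
    intro m n f hN hm hn hpath
    by_cases hbase : m = 1 ∧ n = 1
    · obtain ⟨rfl, rfl⟩ := hbase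
      have h0 : GrecAux w 0 1 = 0 := by rw [GrecAux]
      have h0' : GrecAux w 1 0 = 0 := by rw [GrecAux]
      have : GrecAux w 1 1 = w (1, 1) := by rw [GrecAux, h0, h0']; simp
      rw [this]
      have h1 : (1:ℕ) + 1 - 1 = 1 := rfl
      rw [h1, Finset.sum_range_one, hpath.1]
    · have hL : 1 ≤ m + n - 2 := by omega
      have hlen : m + n - 1 = (m + n - 2) + 1 := by omega
      rw [hlen] at hpath ⊢
      have hfL : f (m + n - 2) = (m, n) := by
        have := hpath.2.1; simpa using this
      rw [Finset.sum_range_succ, hfL]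
      obtain ⟨m', rfl⟩ : ∃ m', m = m' + 1 := ⟨m - 1, by omega⟩
      obtain ⟨n', rfl⟩ : ∃ n', n = n' + 1 := ⟨n - 1, by omega⟩
      rw [GrecAux]
      rcases path_truncate hL hpath with ⟨hm2, _, htr⟩ | ⟨hn2, _, htr⟩
      · have hm' : 1 ≤ m' := by omega
        have htr' : IsUpRightPath f (m' + (n' + 1) - 1) m' (n' + 1) := by
          have he : m' + (n' + 1) - 1 = (m' + 1) + (n' + 1) - 2 := by omega
          rw [he]
          simpa using htr
        have hsum := IH (m' + (n' + 1)) (by omega) m' (n' + 1) f rfl hm' (by omega) htr'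
        have he2 : m' + (n' + 1) - 1 = (m' + 1) + (n' + 1) - 2 := by omega
        rw [he2] at hsum
        calc ∑ k ∈ Finset.range ((m' + 1) + (n' + 1) - 2), w (f k) + w (m' + 1, n' + 1)
            ≤ GrecAux w m' (n' + 1) + w (m' + 1, n' + 1) := by
              exact Nat.add_le_add_right hsum _
          _ ≤ _ := Nat.add_le_add_right (le_max_left _ _) _
      · have hn' : 1 ≤ n' := by omega
        have htr' : IsUpRightPath f ((m' + 1) + n' - 1) (m' + 1) n' := by
          have he : (m' + 1) + n' - 1 = (m' + 1) + (n' + 1) - 2 := by omega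
          rw [he]
          simpa using htr
        have hsum := IH ((m' + 1) + n') (by omega) (m' + 1) n' f rfl (by omega) hn' htr'
        have he2 : (m' + 1) + n' - 1 = (m' + 1) + (n' + 1) - 2 := by omega
        rw [he2] at hsum
        calc ∑ k ∈ Finset.range ((m' + 1) + (n' + 1) - 2), w (f k) + w (m' + 1, n' + 1)
            ≤ GrecAux w (m' + 1) n' + w (m' + 1, n' + 1) := by
              exact Nat.add_le_add_right hsum _
          _ ≤ _ := Nat.add_le_add_right (le_max_right _ _) _

lemma path_extend (w : ℕ × ℕ → ℕ) {f : ℕ → ℕ × ℕ} {L a b : ℕ} (hL : 1 ≤ L)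
    (h : IsUpRightPath f L a b) (v : ℕ × ℕ) (hv : v = (a + 1, b) ∨ v = (a, b + 1)) :
    IsUpRightPath (fun k => if k < L then f k else v) (L + 1) v.1 v.2 ∧
      ∑ k ∈ Finset.range (L + 1), w (if k < L then f k else v) =
        ∑ k ∈ Finset.range L, w (f k) + w v := by
  constructor
  · refine ⟨?_, ?_, ?_⟩
    · simp only [if_pos (by omega : 0 < L)]; exact h.1
    · simp only [show L + 1 - 1 = L from rfl, if_neg (lt_irrefl L)]
    · intro k hk
      by_cases hkL : k + 1 < L
      · simp only [if_pos hkL, if_pos (by omega : k < L)]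
        exact h.2.2 k hkL
      · have hk1 : k + 1 = L := by omega
        have hkL' : k < L := by omega
        simp only [if_pos hkL', if_neg (by omega : ¬ k + 1 < L)]
        have hfk : f k = (a, b) := by
          have := h.2.1
          rwa [show L - 1 = k by omega] at this
        rw [hfk]
        rcases hv with rfl | rfl
        · left; rfl
        · right; rfl
  · rw [Finset.sum_range_succ, if_neg (lt_irrefl L)]
    congr 1
    apply Finset.sum_congr rfl
    intro k hk
    rw [if_pos (Finset.mem_range.mp hk)]

lemma grec_exists_path (w : ℕ × ℕ → ℕ) :
    ∀ N m n, m + n = N → 1 ≤ m → 1 ≤ n →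
      ∃ f : ℕ → ℕ × ℕ, IsUpRightPath f (m + n - 1) m n ∧
        ∑ k ∈ Finset.range (m + n - 1), w (f k) = GrecAux w m n := by
  intro N
  induction N using Nat.strong_induction_on with
  | _ N IH =>
    intro m n hN hm hn
    obtain ⟨m', rfl⟩ : ∃ m', m = m' + 1 := ⟨m - 1, by omega⟩
    obtain ⟨n', rfl⟩ : ∃ n', n = n' + 1 := ⟨n - 1, by omega⟩
    by_cases hbase : m' = 0 ∧ n' = 0
    · obtain ⟨rfl, rfl⟩ := hbase
      refine ⟨fun _ => (1, 1), ⟨rfl, rfl, fun k hk => absurd hk (by omega)⟩, ?_⟩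
      have h0 : GrecAux w 0 1 = 0 := by rw [GrecAux]
      have h0' : GrecAux w 1 0 = 0 := by rw [GrecAux]
      have : GrecAux w 1 1 = w (1, 1) := by rw [GrecAux, h0, h0']; simp
      rw [this]; simp
    · have hkey : ∃ a b, ((m' + 1, n' + 1) = (a + 1, b) ∨ (m' + 1, n' + 1) = (a, b + 1)) ∧
          1 ≤ a ∧ 1 ≤ b ∧ a + b = m' + n' + 1 ∧
          GrecAux w (m' + 1) (n' + 1) = GrecAux w a b + w (m' + 1, n' + 1) := by
        rcases Nat.eq_zero_or_pos n' with rfl | hn'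
        · refine ⟨m', 1, Or.inl rfl, by omega, le_refl 1, by omega, ?_⟩
          have h0 : GrecAux w (m' + 1) 0 = 0 := by rw [GrecAux]
          rw [GrecAux, h0]; simp
        rcases Nat.eq_zero_or_pos m' with rfl | hm'
        · refine ⟨1, n', Or.inr rfl, le_refl 1, by omega, by omega, ?_⟩
          have h0 : GrecAux w 0 (n' + 1) = 0 := by rw [GrecAux]
          rw [GrecAux, h0]; simp
        rcases le_total (GrecAux w m' (n' + 1)) (GrecAux w (m' + 1) n') with hle | hle
        · refine ⟨m' + 1, n', Or.inr rfl, by omega, hn', by omega, ?_⟩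
          rw [GrecAux, max_eq_right hle]
        · refine ⟨m', n' + 1, Or.inl rfl, hm', by omega, by omega, ?_⟩
          rw [GrecAux, max_eq_left hle]
      obtain ⟨a, b, hdir, ha, hb, hab, hgrec⟩ := hkey
      obtain ⟨f, hf, hsum⟩ := IH (a + b) (by omega) a b rfl ha hb
      have hL1 : 1 ≤ a + b - 1 := by omega
      have hdir' : ((m' + 1 : ℕ), (n' + 1 : ℕ)) = (a + 1, b) ∨
          ((m' + 1 : ℕ), (n' + 1 : ℕ)) = (a, b + 1) := hdir
      obtain ⟨hpath', hsum'⟩ := path_extend w hL1 hf ((m' + 1, n' + 1)) hdir'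
      have hlen : (m' + 1) + (n' + 1) - 1 = (a + b - 1) + 1 := by omega
      refine ⟨fun k => if k < a + b - 1 then f k else (m' + 1, n' + 1), ?_, ?_⟩
      · rw [hlen]; exact hpath'
      · rw [hlen, hsum', hsum, hgrec]

lemma GN_eq_grec (w : ℕ × ℕ → ℕ) {m n : ℕ} (hm : 1 ≤ m) (hn : 1 ≤ n) :
    GN w m n = GrecAux w m n := by
  obtain ⟨f0, hf0, hsum0⟩ := grec_exists_path w (m + n) m n rfl hm hn
  have hmem : GrecAux w m n ∈ {S : ℕ | ∃ f : ℕ → ℕ × ℕ,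
      IsUpRightPath f (m + n - 1) m n ∧ S = ∑ k ∈ Finset.range (m + n - 1), w (f k)} :=
    ⟨f0, hf0, hsum0.symm⟩
  have hub : ∀ S ∈ {S : ℕ | ∃ f : ℕ → ℕ × ℕ,
      IsUpRightPath f (m + n - 1) m n ∧ S = ∑ k ∈ Finset.range (m + n - 1), w (f k)},
      S ≤ GrecAux w m n := by
    rintro S ⟨f, hf, rfl⟩
    exact path_sum_le w (m + n) m n f rfl hm hn hf
  apply le_antisymm
  · exact csSup_le ⟨_, hmem⟩ hub
  · exact le_csSup ⟨GrecAux w m n, hub⟩ hmem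

lemma tau_eq_GN_sub (Yt : ℕ × ℕ → ℕ) {i j : ℕ} (hi : 1 ≤ i) (hj : 1 ≤ j) :
    tauRecN Yt i j = GN (fun v => Yt v + 1) i j - j + 1 := by
  obtain ⟨i', rfl⟩ : ∃ i', i = i' + 1 := ⟨i - 1, by omega⟩
  obtain ⟨j', rfl⟩ : ∃ j', j = j' + 1 := ⟨j - 1, by omega⟩
  rw [GN_eq_grec _ hi hj, grec_eq_tau]
  have := tauRecN_pos Yt i' j'
  omega

lemma tauRecN_congr : ∀ (i j : ℕ) (w w' : ℕ × ℕ → ℕ),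
    (∀ v : ℕ × ℕ, v.1 ≤ i → v.2 ≤ j → w v = w' v) → tauRecN w i j = tauRecN w' i j := by
  intro i
  induction i with
  | zero => intro j w w' _; rw [tauRecN, tauRecN]
  | succ i ih =>
    intro j
    induction j with
    | zero => intro w w' _; rw [tauRecN, tauRecN]
    | succ j ihj =>
      intro w w' h
      rw [tauRecN]
      conv_rhs => rw [tauRecN]
      rw [ih (j + 1) w w' (fun v h1 h2 => h v (by omega) h2),
        ihj w w' (fun v h1 h2 => h v h1 (by omega)),
        h (i + 1, j + 1) (le_refl _) (le_refl _)]

lemma joint_singleton {Ω : Type*} [MeasureSpace Ω] (box : Finset (ℕ × ℕ))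
    (X : ℕ × ℕ → Ω → ℕ) (hind : iIndepFun X ℙ)
    (u : {v // v ∈ box} → ℕ) :
    ℙ {ω | ∀ v : {v // v ∈ box}, X v.1 ω = u v} =
      ∏ v ∈ box.attach, ℙ {ω | X v.1 ω = u v} := by
  classical
  set s : ℕ × ℕ → Set Ω := fun v =>
    if h : v ∈ box then {ω | X v ω = u ⟨v, h⟩} else Set.univ with hs_def
  have hset : {ω | ∀ v : {v // v ∈ box}, X v.1 ω = u v} = ⋂ v ∈ box, s v := by
    ext ω
    simp only [Set.mem_iInter, Set.mem_setOf_eq, hs_def]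
    constructor
    · intro h v hv; rw [dif_pos hv]; exact h ⟨v, hv⟩
    · intro h v; have := h v.1 v.2; rwa [dif_pos v.2] at this
  have hmeas : ∀ v : ℕ × ℕ, v ∈ box →
      MeasurableSet[MeasurableSpace.comap (X v) inferInstance] (s v) := by
    intro v hv
    refine ⟨{u ⟨v, hv⟩}, MeasurableSet.singleton _, ?_⟩
    rw [hs_def]; simp only [dif_pos hv]
    ext ω; simp
  rw [hset, hind.meas_biInter hmeas, ← Finset.prod_attach box (fun v => ℙ (s v))]
  apply Finset.prod_congr rfl
  intro v _
  congr 1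
  rw [hs_def]; simp only [dif_pos v.2]

/-- Lemma 5.1: with i.i.d. `Ỹ ~ Geom₀(q)` (`ℙ(Ỹ = s) = q pˢ`, `s ≥ 0`) driving the
recursion `τ`, and i.i.d. `Y ~ Geom₁(q)` (`ℙ(Y = s) = q p^{s-1}`, `s ≥ 1`) driving the
last-passage times `G`, we have `τ(i,j) =_𝒟 G(i,j) - j + 1`. -/
theorem tauRec_identDistrib_lastPassage
    {Ω : Type*} [MeasureSpace Ω] [IsProbabilityMeasure (ℙ : Measure Ω)]
    (p : ℝ) (hp0 : 0 < p) (hp1 : p < 1)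
    (Yt : ℕ × ℕ → Ω → ℕ) (hYtmeas : ∀ v, Measurable (Yt v))
    (hYtindep : iIndepFun Yt ℙ)
    (hYtdist : ∀ v s, ℙ {ω | Yt v ω = s} = ENNReal.ofReal ((1 - p) * p ^ s))
    (Y : ℕ × ℕ → Ω → ℕ) (hYmeas : ∀ v, Measurable (Y v))
    (hYindep : iIndepFun Y ℙ)
    (hYdist : ∀ v s, 1 ≤ s → ℙ {ω | Y v ω = s} = ENNReal.ofReal ((1 - p) * p ^ (s - 1)))
    (i j : ℕ) (hi : 1 ≤ i) (hj : 1 ≤ j) :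
    IdentDistrib (fun ω => tauRecN (fun v => Yt v ω) i j)
      (fun ω => GN (fun v => Y v ω) i j - j + 1) ℙ ℙ := by
  classical
  have hq : 0 < 1 - p := by linarith
  -- ℙ(Y v = 0) = 0
  have htsum : ∑' s : ℕ, ENNReal.ofReal ((1 - p) * p ^ s) = 1 := by
    have h1 : ∀ s : ℕ, ENNReal.ofReal ((1 - p) * p ^ s)
        = ENNReal.ofReal (1 - p) * ENNReal.ofReal p ^ s := by
      intro s
      rw [ENNReal.ofReal_mul hq.le, ENNReal.ofReal_pow hp0.le]
    simp only [h1]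
    rw [ENNReal.tsum_mul_left, ENNReal.tsum_geometric]
    have h2 : (1 : ENNReal) - ENNReal.ofReal p = ENNReal.ofReal (1 - p) := by
      rw [ENNReal.ofReal_sub 1 hp0.le, ENNReal.ofReal_one]
    rw [h2, ENNReal.mul_inv_cancel]
    · exact (ENNReal.ofReal_pos.mpr hq).ne'
    · exact ENNReal.ofReal_ne_top
  have hY0 : ∀ v, ℙ {ω | Y v ω = 0} = 0 := by
    intro v
    have hdisj : Pairwise (Function.onFun Disjoint fun s : ℕ => {ω | Y v ω = s}) := by
      intro s t hst
      simp only [Function.onFun, Set.disjoint_left]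
      intro ω h1 h2
      exact hst (h1.symm.trans h2)
    have hmeas : ∀ s : ℕ, MeasurableSet {ω | Y v ω = s} := fun s =>
      (hYmeas v) (measurableSet_singleton s)
    have huniv : (⋃ s : ℕ, {ω | Y v ω = s}) = Set.univ := by
      ext ω; simp
    have h1 : (1 : ENNReal) = ∑' s : ℕ, ℙ {ω | Y v ω = s} := by
      rw [← measure_iUnion hdisj hmeas, huniv, measure_univ]
    rw [tsum_eq_zero_add' ENNReal.summable] at h1
    have h2 : ∑' s : ℕ, ℙ {ω | Y v ω = s + 1} = 1 := by
      have : ∀ s : ℕ, ℙ {ω | Y v ω = s + 1} = ENNReal.ofReal ((1 - p) * p ^ s) := by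
        intro s
        rw [hYdist v (s + 1) (by omega), Nat.add_sub_cancel]
      simp only [this]
      exact htsum
    rw [h2] at h1
    refine (ENNReal.cancel_of_ne ENNReal.one_ne_top).inj (a := 1) |>.mp ?_
    rw [add_zero, add_comm]
    exact h1.symm
  -- marginals of Y - 1 agree with Yt
  have hY'dist : ∀ v s, ℙ {ω | Y v ω - 1 = s} = ENNReal.ofReal ((1 - p) * p ^ s) := by
    intro v s
    rcases Nat.eq_zero_or_pos s with rfl | hs
    · have hset : {ω | Y v ω - 1 = 0} = {ω | Y v ω = 0} ∪ {ω | Y v ω = 1} := by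
        ext ω; simp only [Set.mem_setOf_eq, Set.mem_union]; omega
      have hub : ℙ ({ω | Y v ω = 0} ∪ {ω | Y v ω = 1}) = ℙ {ω | Y v ω = 1} :=
        le_antisymm ((measure_union_le _ _).trans (by rw [hY0 v, zero_add]))
          (measure_mono Set.subset_union_right)
      rw [hset, hub, hYdist v 1 le_rfl]
    · have hset : {ω | Y v ω - 1 = s} = {ω | Y v ω = s + 1} := by
        ext ω; simp only [Set.mem_setOf_eq]; omega
      rw [hset, hYdist v (s + 1) (by omega), Nat.add_sub_cancel]
  classical
  set box : Finset (ℕ × ℕ) := Finset.range (i + 1) ×ˢ Finset.range (j + 1) with hbox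
  have hmembox : ∀ v : ℕ × ℕ, v.1 ≤ i → v.2 ≤ j → v ∈ box := by
    intro v h1 h2
    simp only [hbox, Finset.mem_product, Finset.mem_range]
    omega
  set g : ({v // v ∈ box} → ℕ) → ℕ :=
    fun u => tauRecN (fun v => if h : v ∈ box then u ⟨v, h⟩ else 0) i j with hg
  have hgmeas : Measurable g := measurable_of_countable g
  set ΦA : Ω → ({v // v ∈ box} → ℕ) := fun ω v => Yt v.1 ω with hΦA
  set ΦB : Ω → ({v // v ∈ box} → ℕ) := fun ω v => Y v.1 ω - 1 with hΦB
  have hΦAmeas : Measurable ΦA := measurable_pi_lambda _ (fun v => hYtmeas v.1)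
  have hsub : Measurable (fun n : ℕ => n - 1) := measurable_of_countable _
  have hΦBmeas : Measurable ΦB := measurable_pi_lambda _ (fun v => hsub.comp (hYmeas v.1))
  have hYindep' : iIndepFun (fun v ω => Y v ω - 1) ℙ :=
    hYindep.comp (fun _ n => n - 1) (fun _ => hsub)
  have hmap : Measure.map ΦA ℙ = Measure.map ΦB ℙ := by
    apply MeasureTheory.Measure.ext_of_singleton
    intro u
    rw [Measure.map_apply hΦAmeas (measurableSet_singleton u),
        Measure.map_apply hΦBmeas (measurableSet_singleton u)]
    have hA : ΦA ⁻¹' {u} = {ω | ∀ v : {v // v ∈ box}, Yt v.1 ω = u v} := by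
      ext ω
      simp [hΦA, funext_iff]
    have hB : ΦB ⁻¹' {u} = {ω | ∀ v : {v // v ∈ box}, Y v.1 ω - 1 = u v} := by
      ext ω
      simp [hΦB, funext_iff]
    rw [hA, hB, joint_singleton box Yt hYtindep u,
        joint_singleton box (fun v ω => Y v ω - 1) hYindep' u]
    apply Finset.prod_congr rfl
    intro v _
    rw [hYtdist v.1 (u v), hY'dist v.1 (u v)]
  have hAfun : (fun ω => tauRecN (fun v => Yt v ω) i j) = g ∘ ΦA := by
    funext ω
    refine tauRecN_congr i j _ _ (fun v h1 h2 => ?_)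
    rw [dif_pos (hmembox v h1 h2)]
  have hBfun : (fun ω => tauRecN (fun v => Y v ω - 1) i j) = g ∘ ΦB := by
    funext ω
    refine tauRecN_congr i j _ _ (fun v h1 h2 => ?_)
    rw [dif_pos (hmembox v h1 h2)]
  have hident : IdentDistrib (fun ω => tauRecN (fun v => Yt v ω) i j)
      (fun ω => tauRecN (fun v => Y v ω - 1) i j) ℙ ℙ := by
    rw [hAfun, hBfun]
    exact ⟨(hgmeas.comp hΦAmeas).aemeasurable, (hgmeas.comp hΦBmeas).aemeasurable, by
      rw [← Measure.map_map hgmeas hΦAmeas, ← Measure.map_map hgmeas hΦBmeas, hmap]⟩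
  have hae : ∀ᵐ ω ∂(ℙ : Measure Ω), ∀ v : ℕ × ℕ, 1 ≤ Y v ω := by
    rw [MeasureTheory.ae_all_iff]
    intro v
    rw [ae_iff]
    have hset : {ω | ¬ 1 ≤ Y v ω} = {ω | Y v ω = 0} := by
      ext ω
      simp only [Set.mem_setOf_eq]
      omega
    rw [hset]
    exact hY0 v
  have haeq : (fun ω => tauRecN (fun v => Y v ω - 1) i j)
      =ᵐ[(ℙ : Measure Ω)] (fun ω => GN (fun v => Y v ω) i j - j + 1) := by
    filter_upwards [hae] with ω hω
    have hfun : (fun v => Y v ω) = fun v => (Y v ω - 1) + 1 :=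
      funext fun v => by have := hω v; omega
    show tauRecN (fun v => Y v ω - 1) i j = GN (fun v => Y v ω) i j - j + 1
    rw [hfun, ← tau_eq_GN_sub (fun v => Y v ω - 1) hi hj]
  exact hident.trans (IdentDistrib.of_ae_eq
    (hBfun ▸ (hgmeas.comp hΦBmeas).aemeasurable) haeq)
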